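/- Let Z be a Banach space with an FDD (E_n) satisfying subsequential V upper block estimates, where V = (v_i) is a normalized, 1-unconditional basic sequence which is weakly null. Then (E_n) is a shrinking FDD. -/

import Mathlib

open Filter Topology Set

noncomputable section

/-- A bundled (real) Banach space. -/
structure BanachSp : Type 1 where
  carrier : Type
  [nacg : NormedAddCommGroup carrier]
  [nsp : NormedSpace ℝ carrier]
  [complete : CompleteSpace carrier]

attribute [instance] BanachSp.nacg BanachSp.nsp BanachSp.complete

instance : CoeSort BanachSp Type := ⟨BanachSp.carrier⟩

section Seqs

variable {V : Type*} [NormedAddCommGroup V] [NormedSpace ℝ V]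
variable {W : Type*} [NormedAddCommGroup W] [NormedSpace ℝ W]
variable {X : Type*} [NormedAddCommGroup X] [NormedSpace ℝ X]

/-- `DomBy u x C` : the sequence `(u i)` `C`-dominates the sequence `(x i)`, i.e.
`‖∑ a i • x i‖ ≤ C * ‖∑ a i • u i‖` for all finitely supported scalars. -/
def DomBy (u : ℕ → V) (x : ℕ → X) (C : ℝ) : Prop :=
  ∀ (a : ℕ → ℝ) (n : ℕ),
    ‖∑ i ∈ Finset.range n, a i • x i‖ ≤ C * ‖∑ i ∈ Finset.range n, a i • u i‖

def IsNormalized (v : ℕ → V) : Prop := ∀ i, ‖v i‖ = 1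

/-- A basic sequence: nonzero vectors with uniformly bounded partial sum projections. -/
def IsBasicSeq (v : ℕ → V) : Prop :=
  (∀ i, v i ≠ 0) ∧ ∃ K : ℝ, 1 ≤ K ∧ ∀ (a : ℕ → ℝ) (m n : ℕ), m ≤ n →
    ‖∑ i ∈ Finset.range m, a i • v i‖ ≤ K * ‖∑ i ∈ Finset.range n, a i • v i‖

/-- `1`-unconditionality : changing signs of coefficients does not change the norm. -/
def IsOneUnconditional (v : ℕ → V) : Prop :=
  ∀ (a ε : ℕ → ℝ), (∀ i, ε i = 1 ∨ ε i = -1) → ∀ n : ℕ,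
    ‖∑ i ∈ Finset.range n, (ε i * a i) • v i‖ = ‖∑ i ∈ Finset.range n, a i • v i‖

/-- Bimonotonicity of a basic sequence: interval projections have norm at most one. -/
def IsBimonotoneSeq (v : ℕ → V) : Prop :=
  ∀ (a : ℕ → ℝ) (p q n : ℕ), q ≤ n →
    ‖∑ i ∈ Finset.Ico p q, a i • v i‖ ≤ ‖∑ i ∈ Finset.range n, a i • v i‖

/-- `(v i)` is `D`-right-dominant : if `m i ≤ n i` for all `i` then `(v (m i))` is
`D`-dominated by `(v (n i))`. -/
def RightDominantC (v : ℕ → V) (D : ℝ) : Prop :=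
  ∀ m n : ℕ → ℕ, StrictMono m → StrictMono n → (∀ i, m i ≤ n i) →
    DomBy (fun i => v (n i)) (fun i => v (m i)) D

def RightDominant (v : ℕ → V) : Prop := ∃ D : ℝ, 1 ≤ D ∧ RightDominantC v D

/-- `(v i)` is `D`-left-dominant : if `m i ≤ n i` for all `i` then `(v (m i))`
`D`-dominates `(v (n i))`. -/
def LeftDominantC (v : ℕ → V) (D : ℝ) : Prop :=
  ∀ m n : ℕ → ℕ, StrictMono m → StrictMono n → (∀ i, m i ≤ n i) →
    DomBy (fun i => v (m i)) (fun i => v (n i)) D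

/-- `C`-block-stability: any two normalized block bases whose blocks run along the same
successive intervals are `C`-equivalent. -/
def BlockStableC (v : ℕ → V) (C : ℝ) : Prop :=
  ∀ (x y : ℕ → V) (k : ℕ → ℕ), StrictMono k →
    (∀ i, x i ∈ Submodule.span ℝ (v '' Set.Ico (k i) (k (i+1)))) →
    (∀ i, y i ∈ Submodule.span ℝ (v '' Set.Ico (k i) (k (i+1)))) →
    (∀ i, ‖x i‖ = 1) → (∀ i, ‖y i‖ = 1) → DomBy x y C

def BlockStable (v : ℕ → V) : Prop := ∃ C : ℝ, 1 ≤ C ∧ BlockStableC v C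

/-- A basic sequence is shrinking if every functional is small on far tails of its span. -/
def ShrinkingSeq (v : ℕ → V) : Prop :=
  ∀ φ : V →L[ℝ] ℝ, ∀ δ : ℝ, 0 < δ → ∃ m : ℕ, ∀ (a : ℕ → ℝ) (n : ℕ),
    ‖∑ i ∈ Finset.Ico m n, a i • v i‖ ≤ 1 →
    |φ (∑ i ∈ Finset.Ico m n, a i • v i)| ≤ δ

/-- A basic sequence is boundedly complete if series with bounded partial sums converge. -/
def BoundedlyCompleteSeq (v : ℕ → V) : Prop :=
  ∀ a : ℕ → ℝ, (∃ M : ℝ, ∀ n, ‖∑ i ∈ Finset.range n, a i • v i‖ ≤ M) →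
    ∃ s : V, Tendsto (fun n => ∑ i ∈ Finset.range n, a i • v i) atTop (𝓝 s)

/-- `(w i)` represents (isometrically) the sequence of biorthogonal functionals of the
`1`-unconditional basic sequence `(v i)`: the norm of `∑ a i • w i` is the supremum of the
pairings `∑ a i * b i` over `b` with `‖∑ b i • v i‖ ≤ 1`. -/
def IsBiorthDual (v : ℕ → V) (w : ℕ → W) : Prop :=
  ∀ (a : ℕ → ℝ) (n : ℕ),
    IsLUB {r : ℝ | ∃ b : ℕ → ℝ, ‖∑ i ∈ Finset.range n, b i • v i‖ ≤ 1 ∧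
      r = ∑ i ∈ Finset.range n, a i * b i} ‖∑ i ∈ Finset.range n, a i • w i‖

def WeaklyNullSeq (x : ℕ → X) : Prop :=
  ∀ φ : X →L[ℝ] ℝ, Tendsto (fun i => φ (x i)) atTop (𝓝 0)

end Seqs

/-- A finite-dimensional decomposition (FDD) of `Z` : finite-dimensional subspaces `E i`
together with the coordinate projections `P i`, such that every `z` is the sum of its
coordinates, uniquely. -/
structure FDD (Z : Type*) [NormedAddCommGroup Z] [NormedSpace ℝ Z] where
  E : ℕ → Submodule ℝ Z
  finDim : ∀ n, FiniteDimensional ℝ (E n)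
  P : ℕ → Z →L[ℝ] Z
  mem_E : ∀ i z, P i z ∈ E i
  sum_eq : ∀ z : Z, Tendsto (fun n => ∑ i ∈ Finset.range n, P i z) atTop (𝓝 z)
  unique : ∀ (z : Z) (f : ℕ → Z), (∀ i, f i ∈ E i) →
    Tendsto (fun n => ∑ i ∈ Finset.range n, f i) atTop (𝓝 z) → ∀ i, f i = P i z

namespace FDD

variable {Z : Type*} [NormedAddCommGroup Z] [NormedSpace ℝ Z]
variable {V : Type*} [NormedAddCommGroup V] [NormedSpace ℝ V]
variable {W : Type*} [NormedAddCommGroup W] [NormedSpace ℝ W]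

/-- The canonical projection `P^E_s` onto the span of `(E i : i ∈ s)`. -/
def proj (F : FDD Z) (s : Finset ℕ) : Z →L[ℝ] Z := ∑ i ∈ s, F.P i

/-- The support of a vector with respect to the FDD. -/
def supp (F : FDD Z) (z : Z) : Set ℕ := {i | F.P i z ≠ 0}

/-- `min supp_E z`. -/
def minSupp (F : FDD Z) (z : Z) : ℕ := sInf (F.supp z)

/-- A block sequence with respect to an FDD: supports lie in successive intervals. -/
def IsBlockSeq (F : FDD Z) (z : ℕ → Z) : Prop :=
  ∃ k : ℕ → ℕ, StrictMono k ∧ ∀ i, F.supp (z i) ⊆ Set.Ico (k i) (k (i+1))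

/-- Bimonotonicity: all interval projections have norm at most `1`. -/
def Bimonotone (F : FDD Z) : Prop :=
  ∀ (m n : ℕ) (z : Z), ‖F.proj (Finset.Icc m n) z‖ ≤ ‖z‖

/-- `C` is the projection constant: the supremum of norms of interval projections. -/
def IsProjConst (F : FDD Z) (C : ℝ) : Prop :=
  IsLUB {r : ℝ | ∃ (m n : ℕ) (z : Z), ‖z‖ ≤ 1 ∧ r = ‖F.proj (Finset.Icc m n) z‖} C

/-- The FDD is shrinking: every functional is the norm limit of its finite-dimensional
restrictions, i.e. the biorthogonal functionals form an FDD of the dual. -/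
def Shrinking (F : FDD Z) : Prop :=
  ∀ φ : Z →L[ℝ] ℝ,
    Tendsto (fun n => ‖φ - φ.comp (F.proj (Finset.range n))‖) atTop (𝓝 0)

/-- The FDD is boundedly complete. -/
def BoundedlyComplete (F : FDD Z) : Prop :=
  ∀ f : ℕ → Z, (∀ i, f i ∈ F.E i) →
    (∃ M : ℝ, ∀ n, ‖∑ i ∈ Finset.range n, f i‖ ≤ M) →
    ∃ z : Z, Tendsto (fun n => ∑ i ∈ Finset.range n, f i) atTop (𝓝 z)

/-- `H` is a blocking of `F`. -/
def IsBlockingOf (H F : FDD Z) : Prop :=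
  ∃ m : ℕ → ℕ, m 0 = 0 ∧ StrictMono m ∧
    ∀ j, H.E j = ⨆ i ∈ Finset.Ico (m j) (m (j+1)), F.E i

/-- The closed span `Z_m` of the subspaces `E i`, `i ≥ m` (the first `m` coordinates
removed). -/
def tail (F : FDD Z) (m : ℕ) : Set Z :=
  closure (↑(⨆ i ∈ Set.Ici m, F.E i) : Set Z)

/-- Subsequential `C`-`V`-upper block estimates. -/
def UpperBlockC (F : FDD Z) (v : ℕ → V) (C : ℝ) : Prop :=
  ∀ z : ℕ → Z, F.IsBlockSeq z → (∀ i, ‖z i‖ = 1) →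
    DomBy (fun i => v (F.minSupp (z i))) z C

def UpperBlock (F : FDD Z) (v : ℕ → V) : Prop := ∃ C : ℝ, 1 ≤ C ∧ F.UpperBlockC v C

/-- Subsequential `C`-`V`-lower block estimates. -/
def LowerBlockC (F : FDD Z) (v : ℕ → V) (C : ℝ) : Prop :=
  ∀ z : ℕ → Z, F.IsBlockSeq z → (∀ i, ‖z i‖ = 1) →
    DomBy z (fun i => v (F.minSupp (z i))) C

def LowerBlock (F : FDD Z) (v : ℕ → V) : Prop := ∃ C : ℝ, 1 ≤ C ∧ F.LowerBlockC v C

/-- A functional supported (w.r.t. the biorthogonal FDD `(E i ^*)`) on the finite set `s`. -/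
def dualSupported (F : FDD Z) (s : Finset ℕ) (φ : Z →L[ℝ] ℝ) : Prop :=
  ∀ z : Z, φ z = φ (F.proj s z)

/-- A block sequence of the biorthogonal functionals `(E i ^*)`. -/
def IsDualBlockSeq (F : FDD Z) (φ : ℕ → Z →L[ℝ] ℝ) : Prop :=
  ∃ k : ℕ → ℕ, StrictMono k ∧
    ∀ i, F.dualSupported (Finset.Ico (k i) (k (i+1))) (φ i)

/-- `min supp` of a functional w.r.t. `(E i ^*)`. -/
def dualMinSupp (F : FDD Z) (φ : Z →L[ℝ] ℝ) : ℕ :=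
  sInf {j | ∃ z, φ (F.P j z) ≠ 0}

/-- The biorthogonal FDD `(E i ^*)` satisfies subsequential `C`-`V^*`-lower block
estimates in `Z^(*)`. -/
def DualLowerBlockC (F : FDD Z) (w : ℕ → W) (C : ℝ) : Prop :=
  ∀ φ : ℕ → Z →L[ℝ] ℝ, F.IsDualBlockSeq φ → (∀ i, ‖φ i‖ = 1) →
    DomBy φ (fun i => w (F.dualMinSupp (φ i))) C

def DualLowerBlock (F : FDD Z) (w : ℕ → W) : Prop := ∃ C : ℝ, 1 ≤ C ∧ F.DualLowerBlockC w C

/-- The biorthogonal FDD `(E i ^*)` satisfies subsequential `C`-`V`-upper block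
estimates. -/
def DualUpperBlockC (F : FDD Z) (w : ℕ → W) (C : ℝ) : Prop :=
  ∀ φ : ℕ → Z →L[ℝ] ℝ, F.IsDualBlockSeq φ → (∀ i, ‖φ i‖ = 1) →
    DomBy (fun i => w (F.dualMinSupp (φ i))) φ C

/-- A `δ̄`-skipped block sequence w.r.t. the FDD. -/
def IsSkippedBlock (F : FDD Z) (δ : ℕ → ℝ) (y : ℕ → Z) : Prop :=
  (∀ i, ‖y i‖ = 1) ∧ ∃ k : ℕ → ℕ, k 0 = 0 ∧ StrictMono k ∧
    ∀ i, ‖F.proj (Finset.Ioo (k i) (k (i+1))) (y i) - y i‖ < δ i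

end FDD

section Trees

variable {V : Type*} [NormedAddCommGroup V] [NormedSpace ℝ V]
variable {W : Type*} [NormedAddCommGroup W] [NormedSpace ℝ W]

/-- The finite set `{n 0, …, n (2l+1)}`, i.e. the branch node of level `l+1` along the
strictly increasing sequence `n`. -/
def branchSet (n : ℕ → ℕ) (l : ℕ) : Finset ℕ := Finset.image n (Finset.range (2*l+2))

/-- A normalized weakly null even tree in `X` (indexed by finite sets of naturals, which
correspond to finite strictly increasing sequences). -/
def WNEvenTree {X : Type*} [NormedAddCommGroup X] [NormedSpace ℝ X]
    (x : Finset ℕ → X) : Prop :=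
  (∀ s : Finset ℕ, Even s.card → ‖x s‖ = 1) ∧
  ∀ s : Finset ℕ, Odd s.card →
    ∀ φ : X →L[ℝ] ℝ, Tendsto (fun k => φ (x (insert k s))) atTop (𝓝 0)

/-- Subsequential `C`-`V`-upper tree estimates. -/
def UpperTreeC (v : ℕ → V) (X : Type*) [NormedAddCommGroup X] [NormedSpace ℝ X]
    (C : ℝ) : Prop :=
  ∀ x : Finset ℕ → X, WNEvenTree x →
    ∃ n : ℕ → ℕ, StrictMono n ∧
      DomBy (fun l => v (n (2*l))) (fun l => x (branchSet n l)) C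

/-- Subsequential `V`-upper tree estimates. -/
def UpperTree (v : ℕ → V) (X : Type*) [NormedAddCommGroup X] [NormedSpace ℝ X] : Prop :=
  ∃ C : ℝ, 1 ≤ C ∧ UpperTreeC v X C

/-- A normalized `w^*`-null even tree in the dual of `X`. -/
def WStarNullEvenTree {X : Type*} [NormedAddCommGroup X] [NormedSpace ℝ X]
    (f : Finset ℕ → (X →L[ℝ] ℝ)) : Prop :=
  (∀ s : Finset ℕ, Even s.card → ‖f s‖ = 1) ∧
  ∀ s : Finset ℕ, Odd s.card →
    ∀ u : X, Tendsto (fun k => f (insert k s) u) atTop (𝓝 0)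

/-- Subsequential `C`-`V^*`-lower `w^*` tree estimates for the dual of `X`. -/
def LowerWStarTreeC (w : ℕ → W) (X : Type*) [NormedAddCommGroup X] [NormedSpace ℝ X]
    (C : ℝ) : Prop :=
  ∀ f : Finset ℕ → (X →L[ℝ] ℝ), WStarNullEvenTree f →
    ∃ n : ℕ → ℕ, StrictMono n ∧
      DomBy (fun l => f (branchSet n l)) (fun l => w (n (2*l))) C

end Trees

section Maps

variable {X : Type*} [NormedAddCommGroup X] [NormedSpace ℝ X]
variable {Y : Type*} [NormedAddCommGroup Y] [NormedSpace ℝ Y]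

/-- `X` embeds isomorphically into `Y`. -/
def Embeds (X Y : Type*) [NormedAddCommGroup X] [NormedSpace ℝ X]
    [NormedAddCommGroup Y] [NormedSpace ℝ Y] : Prop :=
  ∃ T : X →L[ℝ] Y, ∃ c : ℝ, 0 < c ∧ ∀ x : X, c * ‖x‖ ≤ ‖T x‖

/-- `X` is a quotient of `Z` (there is a bounded linear surjection `Z → X`). -/
def IsQuotientOf (X Z : Type*) [NormedAddCommGroup X] [NormedSpace ℝ X]
    [NormedAddCommGroup Z] [NormedSpace ℝ Z] : Prop :=
  ∃ Q : Z →L[ℝ] X, Function.Surjective Q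

/-- A map between dual spaces is `w^*`-`w^*` continuous. -/
def WStarWStarContinuous {X Z : Type*} [NormedAddCommGroup X] [NormedSpace ℝ X]
    [NormedAddCommGroup Z] [NormedSpace ℝ Z]
    (T : StrongDual ℝ X →L[ℝ] StrongDual ℝ Z) : Prop :=
  Continuous (fun φ : WeakDual ℝ X =>
    StrongDual.toWeakDual (T (WeakDual.toStrongDual φ)))

end Maps


section AuxShrink
variable {Z : Type*} [NormedAddCommGroup Z] [NormedSpace ℝ Z]

lemma FDD.proj_apply (F : FDD Z) (s : Finset ℕ) (z : Z) :
    F.proj s z = ∑ i ∈ s, F.P i z := by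
  simp [FDD.proj]

lemma FDD.eq_zero_of_P_zero (F : FDD Z) {z : Z} (h : ∀ j, F.P j z = 0) : z = 0 := by
  have h2 : Tendsto (fun n => ∑ i ∈ Finset.range n, F.P i z) atTop (𝓝 0) := by
    simp only [h, Finset.sum_const_zero]; exact tendsto_const_nhds
  exact tendsto_nhds_unique (F.sum_eq z) h2

lemma FDD.P_P (F : FDD Z) (i j : ℕ) (z : Z) :
    F.P j (F.P i z) = if j = i then F.P i z else 0 := by
  have huniq := F.unique (F.P i z) (fun j => if j = i then F.P i z else 0)
    (fun j => by by_cases h : j = i <;> simp [h, F.mem_E, Submodule.zero_mem])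
    ?_ j
  · exact huniq.symm
  · have heq : ∀ᶠ n in atTop,
        (∑ k ∈ Finset.range n, if k = i then F.P i z else 0) = F.P i z := by
      filter_upwards [eventually_ge_atTop (i+1)] with n hn
      rw [Finset.sum_ite_eq' (Finset.range n) i (fun _ => F.P i z),
        if_pos (Finset.mem_range.2 (by omega))]
    exact Tendsto.congr' (heq.mono fun n hn => hn.symm) tendsto_const_nhds

lemma FDD.P_proj (F : FDD Z) (s : Finset ℕ) (j : ℕ) (z : Z) :
    F.P j (F.proj s z) = if j ∈ s then F.P j z else 0 := by
  rw [F.proj_apply, map_sum]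
  have h : ∀ i ∈ s, F.P j (F.P i z) = if i = j then F.P j z else 0 := by
    intro i _
    rw [F.P_P]
    by_cases h : j = i
    · subst h; simp
    · rw [if_neg h, if_neg (fun h' => h h'.symm)]
  rw [Finset.sum_congr rfl h, Finset.sum_ite_eq' s j (fun _ => F.P j z)]

lemma pad_sum {α : Type*} [AddCommMonoid α] (f : ℕ → α) {k K : ℕ} (h : k ≤ K) :
    ∑ i ∈ Finset.range K, (if i < k then f i else 0) = ∑ i ∈ Finset.range k, f i := by
  rw [← Finset.sum_subset (Finset.range_subset_range.2 h)
      (fun i _ hi => if_neg (fun h' => hi (Finset.mem_range.2 h')))]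
  exact Finset.sum_congr rfl fun i hi => if_pos (Finset.mem_range.1 hi)

lemma smul_pad {V : Type*} [AddCommGroup V] [Module ℝ V] (θ : ℝ) (a : ℕ → ℝ) (w : ℕ → V)
    {k K : ℕ} (h : k ≤ K) :
    θ • ∑ i ∈ Finset.range k, a i • w i
      = ∑ i ∈ Finset.range K, (θ * (if i < k then a i else 0)) • w i := by
  rw [Finset.smul_sum, ← pad_sum (fun i => θ • (a i • w i)) h]
  refine Finset.sum_congr rfl fun i _ => ?_
  by_cases hi : i < k
  · simp [hi, smul_smul]
  · simp [hi]

end AuxShrink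

/-- If an FDD satisfies subsequential `V` upper block estimates with `V` weakly null,
then the FDD is shrinking. -/
theorem shrinking_of_upper_block_weakly_null
    {Z : Type*} [NormedAddCommGroup Z] [NormedSpace ℝ Z] [CompleteSpace Z]
    {V : Type*} [NormedAddCommGroup V] [NormedSpace ℝ V] [CompleteSpace V]
    (F : FDD Z) (v : ℕ → V)
    (hvnorm : IsNormalized v) (hvuncond : IsOneUnconditional v)
    (hvbasic : IsBasicSeq v) (hvwnull : WeaklyNullSeq v)
    (hub : F.UpperBlock v) :
    F.Shrinking := by

  obtain ⟨C, hC1, hCub⟩ := hub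
  intro φ
  by_contra hcon
  rw [Metric.tendsto_atTop] at hcon
  push_neg at hcon
  obtain ⟨δ, hδpos, hfreq⟩ := hcon
  -- uniform bound on the partial sum projections (Banach–Steinhaus)
  have hptw : ∀ z : Z, ∃ c : ℝ, ∀ n : ℕ, ‖F.proj (Finset.range n) z‖ ≤ c := by
    intro z
    have ht : Tendsto (fun n => ‖F.proj (Finset.range n) z‖) atTop (𝓝 ‖z‖) := by
      have := (F.sum_eq z).norm
      refine this.congr fun n => ?_
      rw [F.proj_apply]
    obtain ⟨c, hc⟩ := ht.bddAbove_range
    exact ⟨c, fun n => hc (Set.mem_range_self n)⟩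
  obtain ⟨K0, hK0⟩ := banach_steinhaus hptw
  set K : ℝ := max K0 1 with hKdef
  have hK1 : (1:ℝ) ≤ K := le_max_right _ _
  have hKpos : (0:ℝ) < K := lt_of_lt_of_le one_pos hK1
  have hK : ∀ n : ℕ, ‖F.proj (Finset.range n)‖ ≤ K := fun n => (hK0 n).trans (le_max_left _ _)
  set δ' : ℝ := δ / (4 * K) with hδ'def
  have hδ'pos : 0 < δ' := div_pos hδpos (by positivity)
  -- one-step construction of a block vector
  have hstep : ∀ M : ℕ, ∃ p : Z × ℕ × ℕ,
      M ≤ p.2.1 ∧ p.2.1 < p.2.2 ∧ ‖p.1‖ = 1 ∧ δ' ≤ φ p.1 ∧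
      F.supp p.1 ⊆ Set.Ico p.2.1 p.2.2 := by
    intro M
    obtain ⟨n, hnM, hn⟩ := hfreq M
    set ψ : Z →L[ℝ] ℝ := φ - φ.comp (F.proj (Finset.range n)) with hψdef
    have hψnorm : δ / 2 < ‖ψ‖ := by
      have hdist : dist ‖ψ‖ 0 = ‖ψ‖ := by
        simp [Real.dist_eq, abs_of_nonneg (norm_nonneg _)]
      rw [hdist] at hn
      linarith
    obtain ⟨z0, hz0, hz0v⟩ := ψ.exists_lt_apply_of_lt_opNorm hψnorm
    obtain ⟨z, hz, hzv⟩ : ∃ z : Z, ‖z‖ ≤ 1 ∧ δ / 2 < ψ z := by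
      rcases le_or_gt 0 (ψ z0) with h | h
      · exact ⟨z0, hz0.le, by rwa [Real.norm_eq_abs, abs_of_nonneg h] at hz0v⟩
      · refine ⟨-z0, by simpa using hz0.le, ?_⟩
        rw [map_neg]
        rwa [Real.norm_eq_abs, abs_of_neg h] at hz0v
    have hψz : ψ z = φ z - φ (F.proj (Finset.range n) z) := by
      simp [hψdef]
    have hsplit : ∀ N : ℕ, n ≤ N → F.proj (Finset.range N) z
        = F.proj (Finset.range n) z + F.proj (Finset.Ico n N) z := by
      intro N hN
      rw [F.proj_apply, F.proj_apply, F.proj_apply, Finset.range_eq_Ico, Finset.range_eq_Ico,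
        Finset.sum_Ico_consecutive _ (Nat.zero_le n) hN]
    have hsum : Tendsto (fun N => F.proj (Finset.range N) z) atTop (𝓝 z) := by
      have := F.sum_eq z
      refine this.congr fun N => ?_
      rw [F.proj_apply]
    have hlim : Tendsto (fun N => φ (F.proj (Finset.Ico n N) z)) atTop (𝓝 (ψ z)) := by
      have h1 : Tendsto (fun N => φ (F.proj (Finset.range N) z)
          - φ (F.proj (Finset.range n) z)) atTop
          (𝓝 (φ z - φ (F.proj (Finset.range n) z))) :=
        ((φ.continuous.tendsto z).comp hsum).sub tendsto_const_nhds
      rw [← hψz] at h1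
      refine Tendsto.congr' ?_ h1
      filter_upwards [eventually_ge_atTop n] with N hN
      rw [hsplit N hN, map_add]
      ring
    obtain ⟨N, hNn, hNφ⟩ : ∃ N : ℕ, n + 1 ≤ N ∧ δ / 2 < φ (F.proj (Finset.Ico n N) z) := by
      have := (eventually_ge_atTop (n+1)).and (hlim.eventually_const_lt hzv)
      obtain ⟨N, h1, h2⟩ := this.exists
      exact ⟨N, h1, h2⟩
    set y : Z := F.proj (Finset.Ico n N) z with hydef
    have hynorm : ‖y‖ ≤ 2 * K := by
      have h1 : y = F.proj (Finset.range N) z - F.proj (Finset.range n) z := by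
        rw [hsplit N (by omega)]; abel
      rw [h1]
      have h2 : ‖F.proj (Finset.range N) z‖ ≤ K := by
        calc ‖F.proj (Finset.range N) z‖ ≤ ‖F.proj (Finset.range N)‖ * ‖z‖ :=
              (F.proj (Finset.range N)).le_opNorm z
          _ ≤ K * 1 := mul_le_mul (hK N) hz (norm_nonneg _) hKpos.le
          _ = K := mul_one K
      have h3 : ‖F.proj (Finset.range n) z‖ ≤ K := by
        calc ‖F.proj (Finset.range n) z‖ ≤ ‖F.proj (Finset.range n)‖ * ‖z‖ :=
              (F.proj (Finset.range n)).le_opNorm z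
          _ ≤ K * 1 := mul_le_mul (hK n) hz (norm_nonneg _) hKpos.le
          _ = K := mul_one K
      calc ‖F.proj (Finset.range N) z - F.proj (Finset.range n) z‖
          ≤ ‖F.proj (Finset.range N) z‖ + ‖F.proj (Finset.range n) z‖ := norm_sub_le _ _
        _ ≤ 2 * K := by linarith
    have hypos : 0 < ‖y‖ := by
      rcases eq_or_ne y 0 with h | h
      · rw [h] at hNφ; simp at hNφ; linarith
      · exact norm_pos_iff.2 h
    refine ⟨(‖y‖⁻¹ • y, n, N), hnM, show n < N by omega, ?_, ?_, ?_⟩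
    · rw [norm_smul, norm_inv, norm_norm, inv_mul_cancel₀ hypos.ne']
    · rw [map_smul, smul_eq_mul]
      have hinv : (2*K)⁻¹ ≤ ‖y‖⁻¹ := by
        apply inv_anti₀ hypos hynorm
      have hδ'eq : δ' = (δ/2) * (2*K)⁻¹ := by
        rw [hδ'def, show (4:ℝ)*K = 2*(2*K) by ring, ← div_div, div_eq_mul_inv]
      rw [hδ'eq, mul_comm (‖y‖⁻¹)]
      exact mul_le_mul hNφ.le hinv (by positivity) (by linarith)
    · intro j hj
      have hPy : F.P j ((‖y‖⁻¹ : ℝ) • y) = (‖y‖⁻¹ : ℝ) • F.P j y := map_smul _ _ _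
      by_contra hjmem
      have : F.P j y = 0 := by
        rw [hydef, F.P_proj, if_neg]
        intro hmem
        exact hjmem (by simpa [Set.mem_Ico] using Finset.mem_Ico.1 hmem)
      exact hj (by rw [hPy, this, smul_zero])
  -- recursive construction of the block sequence
  classical
  set g : ℕ → Z × ℕ × ℕ := fun i =>
    Nat.rec (Classical.choose (hstep 0))
      (fun _ q => Classical.choose (hstep q.2.2)) i with hgdef
  have hg0 : g 0 = Classical.choose (hstep 0) := rfl
  have hgsucc : ∀ i, g (i+1) = Classical.choose (hstep ((g i).2.2)) := fun i => rfl
  set x : ℕ → Z := fun i => (g i).1 with hxdef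
  set nn : ℕ → ℕ := fun i => (g i).2.1 with hnndef
  set NN : ℕ → ℕ := fun i => (g i).2.2 with hNNdef
  have hform : ∀ i, ∃ M, g i = Classical.choose (hstep M) := by
    intro i
    cases i with
    | zero => exact ⟨0, rfl⟩
    | succ j => exact ⟨(g j).2.2, rfl⟩
  have hprop : ∀ i, nn i < NN i ∧ ‖x i‖ = 1 ∧ δ' ≤ φ (x i) ∧
      F.supp (x i) ⊆ Set.Ico (nn i) (NN i) := by
    intro i
    obtain ⟨M, hM⟩ := hform i
    have hspec := Classical.choose_spec (hstep M)
    rw [← hM] at hspec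
    exact ⟨hspec.2.1, hspec.2.2.1, hspec.2.2.2.1, hspec.2.2.2.2⟩
  have hNle : ∀ i, NN i ≤ nn (i+1) := by
    intro i
    have hspec := Classical.choose_spec (hstep ((g i).2.2))
    rw [← hgsucc i] at hspec
    exact hspec.1
  have hmono : StrictMono nn :=
    strictMono_nat_of_lt_succ fun i => lt_of_lt_of_le (hprop i).1 (hNle i)
  have hxnorm : ∀ i, ‖x i‖ = 1 := fun i => (hprop i).2.1
  have hφx : ∀ i, δ' ≤ φ (x i) := fun i => (hprop i).2.2.1
  have hblock : F.IsBlockSeq x := by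
    refine ⟨nn, hmono, fun i => ?_⟩
    refine ((hprop i).2.2.2).trans ?_
    exact Set.Ico_subset_Ico le_rfl (hNle i)
  have hdom := hCub x hblock hxnorm
  -- the minimal support indices tend to infinity
  set m : ℕ → ℕ := fun i => F.minSupp (x i) with hmdef
  have hmge : ∀ i, i ≤ m i := by
    intro i
    have hxne : x i ≠ 0 := by
      intro h
      have := hxnorm i
      rw [h, norm_zero] at this
      exact one_ne_zero this.symm
    have hne : (F.supp (x i)).Nonempty := by
      by_contra h
      rw [Set.not_nonempty_iff_eq_empty] at h
      refine hxne (F.eq_zero_of_P_zero fun j => ?_)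
      by_contra hj
      exact absurd (Set.eq_empty_iff_forall_notMem.1 h j) (fun h' => h' hj)
    have hmem : m i ∈ F.supp (x i) := Nat.sInf_mem hne
    have h2 := (hprop i).2.2.2 hmem
    have h3 : nn i ≤ m i := h2.1
    exact le_trans (hmono.le_apply) h3
  -- the convex set of combinations of v (m i)
  set S : Set V := {u | ∃ (a : ℕ → ℝ) (k : ℕ), (∀ i, 0 ≤ a i) ∧
      (∑ i ∈ Finset.range k, a i = 1) ∧
      u = ∑ i ∈ Finset.range k, a i • v (m i)} with hSdef
  have hconv : Convex ℝ S := by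
    rintro u1 ⟨a, k1, ha0, hasum, rfl⟩ u2 ⟨b, k2, hb0, hbsum, rfl⟩ θ η hθ hη hθη
    refine ⟨fun i => θ * (if i < k1 then a i else 0) + η * (if i < k2 then b i else 0),
      max k1 k2, fun i => ?_, ?_, ?_⟩
    · have h1 : (0:ℝ) ≤ if i < k1 then a i else 0 := by
        split_ifs with h
        exacts [ha0 i, le_rfl]
      have h2 : (0:ℝ) ≤ if i < k2 then b i else 0 := by
        split_ifs with h
        exacts [hb0 i, le_rfl]
      exact add_nonneg (mul_nonneg hθ h1) (mul_nonneg hη h2)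
    · rw [Finset.sum_add_distrib, ← Finset.mul_sum, ← Finset.mul_sum,
        pad_sum a (le_max_left k1 k2), pad_sum b (le_max_right k1 k2), hasum, hbsum]
      simpa using hθη
    · have hsplit : ∑ i ∈ Finset.range (max k1 k2),
          (θ * (if i < k1 then a i else 0) + η * (if i < k2 then b i else 0)) • v (m i)
          = ∑ i ∈ Finset.range (max k1 k2), (θ * (if i < k1 then a i else 0)) • v (m i)
            + ∑ i ∈ Finset.range (max k1 k2), (η * (if i < k2 then b i else 0)) • v (m i) := by
        rw [← Finset.sum_add_distrib]
        exact Finset.sum_congr rfl fun i _ => add_smul _ _ _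
      rw [hsplit, ← smul_pad θ a _ (le_max_left k1 k2), ← smul_pad η b _ (le_max_right k1 k2)]
  have h0mem : (0:V) ∈ closure S := by
    by_contra h0
    obtain ⟨f, u, hfu, hu0⟩ := geometric_hahn_banach_closed_point
      hconv.closure isClosed_closure h0
    have hu : u < 0 := by simpa using hu0
    have hmemS : ∀ i, v (m i) ∈ S := by
      intro i
      refine ⟨fun j => if j = i then 1 else 0, i+1, fun j => by positivity, ?_, ?_⟩
      · rw [Finset.sum_ite_eq' (Finset.range (i+1)) i (fun _ => (1:ℝ)),
          if_pos (Finset.mem_range.2 (Nat.lt_succ_self i))]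
      · have : ∀ j ∈ Finset.range (i+1),
            (if j = i then (1:ℝ) else 0) • v (m j) = if j = i then v (m i) else 0 := by
          intro j _
          by_cases h : j = i
          · subst h; simp
          · simp [h]
        rw [Finset.sum_congr rfl this,
          Finset.sum_ite_eq' (Finset.range (i+1)) i (fun _ => v (m i)),
          if_pos (Finset.mem_range.2 (Nat.lt_succ_self i))]
    have hmtop : Tendsto m atTop atTop := tendsto_atTop_mono hmge tendsto_id
    have htend : Tendsto (fun i => f (v (m i))) atTop (𝓝 0) := (hvwnull f).comp hmtop
    obtain ⟨i, hi⟩ := (htend.eventually_const_lt hu).exists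
    exact absurd (hfu _ (subset_closure (hmemS i))) (not_lt.2 hi.le)
  -- extract a small convex combination and derive the contradiction
  set ε : ℝ := δ' / (‖φ‖ * C + 1) with hεdef
  have hεpos : 0 < ε := by
    apply div_pos hδ'pos
    have : (0:ℝ) ≤ ‖φ‖ * C := mul_nonneg (norm_nonneg _) (by linarith)
    linarith
  obtain ⟨b, hbS, hbd⟩ := Metric.mem_closure_iff.1 h0mem ε hεpos
  obtain ⟨a, k, ha0, hasum, rfl⟩ := hbS
  rw [dist_zero_left] at hbd
  have hsum1 : δ' ≤ φ (∑ i ∈ Finset.range k, a i • x i) := by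
    rw [map_sum]
    calc δ' = ∑ i ∈ Finset.range k, a i * δ' := by
          rw [← Finset.sum_mul, hasum, one_mul]
      _ ≤ ∑ i ∈ Finset.range k, a i * φ (x i) :=
          Finset.sum_le_sum fun i _ => mul_le_mul_of_nonneg_left (hφx i) (ha0 i)
      _ = ∑ i ∈ Finset.range k, φ (a i • x i) := by
          refine Finset.sum_congr rfl fun i _ => ?_
          rw [map_smul, smul_eq_mul]
  have hsum2 : ‖∑ i ∈ Finset.range k, a i • x i‖ ≤
      C * ‖∑ i ∈ Finset.range k, a i • v (m i)‖ := hdom a k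
  have hsum3 : φ (∑ i ∈ Finset.range k, a i • x i) ≤
      ‖φ‖ * ‖∑ i ∈ Finset.range k, a i • x i‖ :=
    le_trans (le_abs_self _) (φ.le_opNorm _)
  have hfin : δ' ≤ ‖φ‖ * C * ‖∑ i ∈ Finset.range k, a i • v (m i)‖ := by
    calc δ' ≤ φ (∑ i ∈ Finset.range k, a i • x i) := hsum1
      _ ≤ ‖φ‖ * ‖∑ i ∈ Finset.range k, a i • x i‖ := hsum3
      _ ≤ ‖φ‖ * (C * ‖∑ i ∈ Finset.range k, a i • v (m i)‖) :=
          mul_le_mul_of_nonneg_left hsum2 (norm_nonneg _)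
      _ = ‖φ‖ * C * ‖∑ i ∈ Finset.range k, a i • v (m i)‖ := by ring
  have hA : (0:ℝ) ≤ ‖φ‖ * C := mul_nonneg (norm_nonneg _) (by linarith)
  have h1 : ‖φ‖ * C * ‖∑ i ∈ Finset.range k, a i • v (m i)‖ ≤ ‖φ‖ * C * ε :=
    mul_le_mul_of_nonneg_left hbd.le hA
  have h2 : ‖φ‖ * C * ε < δ' := by
    rw [hεdef]
    rw [← mul_div_assoc]
    rw [div_lt_iff₀ (by linarith)]
    nlinarith
  linarith
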